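/- Let r, n, d_min, m be positive integers with r + m ≤ n, and let F be an r×n binary matrix whose rows are linearly independent over F₂; let 𝓕 denote the set of rows of F. Suppose 2^{n−r−m+1} > Σ_{i=0}^{d_min−1} C(n, i). Then there exists a set W of m vectors in F₂ⁿ such that the set W ∪ 𝓕 is linearly independent over F₂ and every vector v in span(W ∪ 𝓕) \ span(𝓕) has Hamming weight at least d_min. -/

import Mathlib

open Finset

private lemma zmod2_eq_of_ne_iff (a b : ZMod 2) (h : (a ≠ 0) ↔ (b ≠ 0)) : a = b := by
  revert a b; decide

private lemma ball_card (n d : ℕ) :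
    (Finset.univ.filter (fun v : Fin n → ZMod 2 => hammingNorm v < d)).card
      ≤ ∑ i ∈ Finset.range d, n.choose i := by
  classical
  set T := (Finset.range d).biUnion
    (fun i => Finset.powersetCard i (Finset.univ : Finset (Fin n))) with hT
  have h1 : (Finset.univ.filter (fun v : Fin n → ZMod 2 => hammingNorm v < d)).card
      ≤ T.card := by
    apply Finset.card_le_card_of_injOn (fun v => Finset.univ.filter (fun i => v i ≠ 0))
    · intro v hv
      simp only [Finset.mem_coe, Finset.mem_filter, Finset.mem_univ, true_and] at hv
      simp only [Finset.mem_coe, hT, Finset.mem_biUnion, Finset.mem_range, Finset.mem_powersetCard]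
      refine ⟨hammingNorm v, hv, Finset.subset_univ _, ?_⟩
      rfl
    · intro v _ w _ h
      funext i
      apply zmod2_eq_of_ne_iff
      have := Finset.ext_iff.1 h i
      simpa using this
  have h2 : T.card ≤ ∑ i ∈ Finset.range d, n.choose i := by
    refine le_trans Finset.card_biUnion_le ?_
    apply Finset.sum_le_sum
    intro i _
    rw [Finset.card_powersetCard, Finset.card_univ, Fintype.card_fin]
  exact h1.trans h2

/-- privacy amplification: given an `r × n` binary parity check matrix `F`
with linearly independent rows, if `2^{n−r−m+1} > Σ_{i=0}^{d_min−1} C(n,i)` then there is a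
set `W` of `m` vectors of `F₂ⁿ` such that `W ∪ 𝓕` is linearly independent and every vector
of `span(W ∪ 𝓕) \ span(𝓕)` has Hamming weight at least `d_min`. -/
theorem stmt19 (r n dmin m : ℕ) (hr : 0 < r) (hn : 0 < n) (hdmin : 0 < dmin) (hm : 0 < m)
    (hrmn : r + m ≤ n)
    (F : Matrix (Fin r) (Fin n) (ZMod 2))
    (hF : LinearIndependent (ZMod 2) (fun i => F i))
    (hcount : (∑ i ∈ Finset.range dmin, n.choose i) < 2 ^ (n - r - m + 1)) :
    ∃ W : Finset (Fin n → ZMod 2),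
      W.card = m ∧
      LinearIndependent (ZMod 2)
        (fun x : ((W : Set (Fin n → ZMod 2)) ∪ Set.range (fun i => F i) : Set (Fin n → ZMod 2)) =>
          (x : Fin n → ZMod 2)) ∧
      ∀ v ∈ Submodule.span (ZMod 2)
          ((W : Set (Fin n → ZMod 2)) ∪ Set.range (fun i => F i)),
        v ∉ Submodule.span (ZMod 2) (Set.range (fun i => F i)) →
          dmin ≤ hammingNorm v := by
  classical
  set f : Fin r → (Fin n → ZMod 2) := fun i => F i with hf
  have key : ∀ k, k ≤ m → ∃ s : Finset (Fin n → ZMod 2),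
      s.card = k ∧
      LinearIndependent (ZMod 2)
        (fun x : ((s : Set (Fin n → ZMod 2)) ∪ Set.range f : Set (Fin n → ZMod 2)) =>
          (x : Fin n → ZMod 2)) ∧
      ∀ v ∈ Submodule.span (ZMod 2) ((s : Set (Fin n → ZMod 2)) ∪ Set.range f),
        v ∉ Submodule.span (ZMod 2) (Set.range f) → dmin ≤ hammingNorm v := by
    intro k
    induction k with
    | zero =>
      intro _
      refine ⟨∅, Finset.card_empty, ?_, ?_⟩
      · have h : ((∅ : Finset (Fin n → ZMod 2)) : Set (Fin n → ZMod 2)) ∪ Set.range f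
            = Set.range f := by simp
        rw [h]
        exact hF.linearIndepOn_id
      · intro v hv hnv
        rw [Finset.coe_empty, Set.empty_union] at hv
        exact absurd hv hnv
    | succ k ih =>
      intro hk1
      obtain ⟨s, hcard, hind, hwt⟩ := ih (Nat.le_of_succ_le hk1)
      set T : Set (Fin n → ZMod 2) := (s : Set (Fin n → ZMod 2)) ∪ Set.range f with hTdef
      set S : Submodule (ZMod 2) (Fin n → ZMod 2) := Submodule.span (ZMod 2) T with hS
      have : Fintype ↥S := Fintype.ofFinite _
      -- bound the dimension of S
      have hTfin : T = ↑(s ∪ Finset.image f Finset.univ) := by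
        simp [hTdef, Set.image_univ]
      have hfr : Module.finrank (ZMod 2) ↥S ≤ k + r := by
        have h1 : Module.finrank (ZMod 2) ↥S ≤ (s ∪ Finset.image f Finset.univ).card := by
          rw [hS, hTfin]
          exact finrank_span_finset_le_card _
        refine h1.trans ?_
        calc (s ∪ Finset.image f Finset.univ).card
            ≤ s.card + (Finset.image f Finset.univ).card := Finset.card_union_le _ _
          _ ≤ k + r := by
              have := Finset.card_image_le (f := f) (s := Finset.univ)
              simp only [Finset.card_univ, Fintype.card_fin] at this
              omega
      have hScard : Fintype.card ↥S ≤ 2 ^ (k + r) := by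
        have h := Module.card_eq_pow_finrank (K := ZMod 2) (V := ↥S)
        rw [ZMod.card 2] at h
        rw [h]
        exact Nat.pow_le_pow_right (by norm_num) hfr
      -- the bad set
      set ballF : Finset (Fin n → ZMod 2) :=
        Finset.univ.filter (fun v => hammingNorm v < dmin) with hball
      set bad : Finset (Fin n → ZMod 2) :=
        ((S : Set (Fin n → ZMod 2)).toFinset ×ˢ ballF).image (fun p => p.1 + p.2) with hbad
      have hbadcard : bad.card < 2 ^ n := by
        have h1 : bad.card ≤ (S : Set (Fin n → ZMod 2)).toFinset.card * ballF.card := by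
          refine le_trans (Finset.card_image_le) ?_
          rw [Finset.card_product]
        have h2 : (S : Set (Fin n → ZMod 2)).toFinset.card = Fintype.card ↥S := by
          rw [Set.toFinset_card]
          exact Fintype.card_congr' rfl
        have h3 : ballF.card ≤ ∑ i ∈ Finset.range dmin, n.choose i := ball_card n dmin
        have h4 : bad.card ≤ 2 ^ (k + r) * (∑ i ∈ Finset.range dmin, n.choose i) := by
          calc bad.card ≤ (S : Set (Fin n → ZMod 2)).toFinset.card * ballF.card := h1
            _ ≤ 2 ^ (k + r) * (∑ i ∈ Finset.range dmin, n.choose i) := by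
                rw [h2]; exact Nat.mul_le_mul hScard h3
        have h5 : 2 ^ (k + r) * (∑ i ∈ Finset.range dmin, n.choose i)
            < 2 ^ (k + r) * 2 ^ (n - r - m + 1) :=
          mul_lt_mul_of_pos_left hcount (Nat.pow_pos (by norm_num))
        have h6 : 2 ^ (k + r) * 2 ^ (n - r - m + 1) ≤ 2 ^ n := by
          rw [← pow_add]
          apply Nat.pow_le_pow_right (by norm_num)
          omega
        omega
      -- pick a good vector w
      have hexw : ∃ w : Fin n → ZMod 2, w ∉ bad := by
        by_contra hcon
        push_neg at hcon
        have huniv : (Finset.univ : Finset (Fin n → ZMod 2)) ⊆ bad := fun w _ => hcon w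
        have := Finset.card_le_card huniv
        have hcu : (Finset.univ : Finset (Fin n → ZMod 2)).card = 2 ^ n := by
          simp [ZMod.card 2]
        omega
      obtain ⟨w, hw⟩ := hexw
      have hwgood : ∀ u ∈ S, ∀ b : Fin n → ZMod 2, hammingNorm b < dmin → w ≠ u + b := by
        intro u hu b hb hcontra
        apply hw
        rw [hbad]
        apply Finset.mem_image.2
        refine ⟨(u, b), ?_, hcontra.symm⟩
        rw [Finset.mem_product]
        exact ⟨Set.mem_toFinset.2 hu, by simp [hball, hb]⟩
      -- hence for every u ∈ S, w - u has weight ≥ dmin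
      have hwdist : ∀ u ∈ S, dmin ≤ hammingNorm (w - u) := by
        intro u hu
        by_contra hlt
        push_neg at hlt
        exact hwgood u hu (w - u) hlt (by ring)
      have hwnot : w ∉ S := by
        intro hwS
        have := hwdist w hwS
        simp at this
        omega
      -- build the new set
      refine ⟨insert w s, ?_, ?_, ?_⟩
      · rw [Finset.card_insert_of_notMem, hcard]
        intro hws
        exact hwnot (Submodule.subset_span (Or.inl hws))
      · have hcoe : ((insert w s : Finset (Fin n → ZMod 2)) : Set (Fin n → ZMod 2)) ∪ Set.range f
            = insert w T := by
          rw [hTdef, Finset.coe_insert, Set.insert_union]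
        rw [hcoe]
        exact LinearIndepOn.id_insert (s := T) hind hwnot
      · intro v hv hnv
        have hcoe : ((insert w s : Finset (Fin n → ZMod 2)) : Set (Fin n → ZMod 2)) ∪ Set.range f
            = insert w T := by
          rw [hTdef, Finset.coe_insert, Set.insert_union]
        rw [hcoe] at hv
        rw [Submodule.mem_span_insert] at hv
        obtain ⟨a, z, hz, rfl⟩ := hv
        rcases (by clear hnv; revert a; decide : a = 0 ∨ a = 1) with ha | ha
        · subst ha
          simp only [zero_smul, zero_add]
          simp only [zero_smul, zero_add] at hnv
          exact hwt z hz hnv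
        · subst ha
          simp only [one_smul]
          have heq : w + z = w - (-z) := by ring
          rw [heq]
          exact hwdist (-z) (neg_mem hz)
  obtain ⟨W, hWcard, hWind, hWwt⟩ := key m (le_refl m)
  exact ⟨W, hWcard, hWind, hWwt⟩
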